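/- arXiv:1503.02323 — 7 statements merged into one kernel-verified Lean document; each statement's English description precedes it below -/
import Mathlib

section
/- Let Y be a submonoid of the affine space Kˢ under componentwise multiplication (with identity (1,...,1)). Then the vanishing ideal I(Y) ⊆ K[t₁,...,tₛ] is generated by binomials, i.e., by differences of monomials tᵃ − tᵇ with a, b ∈ ℕˢ. -/
open MvPolynomial

noncomputable section

variable {K : Type} [Field K] {s : ℕ}

def IsBinomialIdeal {σ : Type} (I : Ideal (MvPolynomial σ K)) : Prop :=
  ∃ B : Set (MvPolynomial σ K),
    (∀ f ∈ B, ∃ a b : σ →₀ ℕ, f = monomial a 1 - monomial b 1) ∧ I = Ideal.span B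

def affineVanishingIdeal (Y : Set (Fin s → K)) : Ideal (MvPolynomial (Fin s) K) :=
  Ideal.span {f | ∀ α ∈ Y, eval α f = 0}

def affineZeroSet (I : Ideal (MvPolynomial (Fin s) K)) : Set (Fin s → K) :=
  {α | ∀ f ∈ I, eval α f = 0}

def projVanishingIdeal (Y : Set (Projectivization K (Fin s → K))) :
    Ideal (MvPolynomial (Fin s) K) :=
  Ideal.span {f | (∃ n, f.IsHomogeneous n) ∧
    ∀ (α : Fin s → K) (hα : α ≠ 0), Projectivization.mk K α hα ∈ Y → eval α f = 0}

def projZeroSet (I : Ideal (MvPolynomial (Fin s) K)) :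
    Set (Projectivization K (Fin s → K)) :=
  {p | ∀ f ∈ I, (∃ n, f.IsHomogeneous n) →
    ∀ (α : Fin s → K) (hα : α ≠ 0), Projectivization.mk K α hα = p → eval α f = 0}

def IsProjSubmonoid (Y : Set (Projectivization K (Fin s → K))) : Prop :=
  (∀ h1 : (1 : Fin s → K) ≠ 0, Projectivization.mk K 1 h1 ∈ Y) ∧
  ∀ (α β : Fin s → K) (hα : α ≠ 0) (hβ : β ≠ 0),
    Projectivization.mk K α hα ∈ Y → Projectivization.mk K β hβ ∈ Y →
    ∀ hab : α * β ≠ 0, Projectivization.mk K (α * β) hab ∈ Y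

def projTorus (K : Type) [Field K] (s : ℕ) : Set (Projectivization K (Fin s → K)) :=
  {p | ∀ (α : Fin s → K) (hα : α ≠ 0), Projectivization.mk K α hα = p → ∀ i, α i ≠ 0}

def IsTorusSubgroup (Y : Set (Projectivization K (Fin s → K))) : Prop :=
  Y ⊆ projTorus K s ∧ IsProjSubmonoid Y ∧
  ∀ (α : Fin s → K) (hα : α ≠ 0), Projectivization.mk K α hα ∈ Y →
    ∀ hinv : α⁻¹ ≠ 0, Projectivization.mk K α⁻¹ hinv ∈ Y

def IsLatticeIdeal (I : Ideal (MvPolynomial (Fin s) K)) : Prop :=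
  IsBinomialIdeal I ∧ ∀ (i : Fin s) (f : MvPolynomial (Fin s) K), X i * f ∈ I → f ∈ I

def IsGradedIdeal {σ : Type} (I : Ideal (MvPolynomial σ K)) : Prop :=
  ∀ f ∈ I, ∀ n, homogeneousComponent n f ∈ I

def chiHom (M : Submonoid (Fin s → K)) (a : Fin s →₀ ℕ) : M →* K where
  toFun y := eval (y : Fin s → K) (monomial a (1 : K))
  map_one' := by simp [eval_monomial, Finsupp.prod]
  map_mul' x y := by
    simp [eval_monomial, Finsupp.prod, mul_pow, Finset.prod_mul_distrib]

theorem affine_monoid_binomial (Y : Set (Fin s → K))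
    (h1 : (1 : Fin s → K) ∈ Y)
    (hmul : ∀ a ∈ Y, ∀ b ∈ Y, a * b ∈ Y) :
    IsBinomialIdeal (affineVanishingIdeal Y) := by
  classical
  set M : Submonoid (Fin s → K) :=
    { carrier := Y, one_mem' := h1, mul_mem' := fun ha hb => hmul _ ha _ hb } with hMdef
  set B : Set (MvPolynomial (Fin s) K) :=
    {f | ∃ a b : Fin s →₀ ℕ, f = monomial a 1 - monomial b 1 ∧ chiHom M a = chiHom M b}
    with hBdef
  refine ⟨B, fun f hf => ?_, ?_⟩
  · obtain ⟨a, b, hab, -⟩ := hf; exact ⟨a, b, hab⟩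
  unfold affineVanishingIdeal
  apply le_antisymm
  · rw [Ideal.span_le]
    intro f hf
    -- f vanishes on Y
    have hli := linearIndependent_iff.mp (linearIndependent_monoidHom M K)
    set c : (M →* K) →₀ K :=
      ∑ a ∈ f.support, Finsupp.single (chiHom M a) (coeff a f) with hcdef
    have hc : c = 0 := by
      apply hli
      rw [hcdef, map_sum]
      simp only [Finsupp.linearCombination_single]
      funext y
      simp only [Finset.sum_apply, Pi.smul_apply, Pi.zero_apply, smul_eq_mul]
      have : ∀ a ∈ f.support, coeff a f * (chiHom M a) y
          = coeff a f * ∏ i ∈ a.support, (y : Fin s → K) i ^ a i := by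
        intro a _
        simp [chiHom, eval_monomial, Finsupp.prod]
      rw [Finset.sum_congr rfl this, ← eval_eq]
      exact hf (y : Fin s → K) y.2
    -- class sums vanish
    have hclass : ∀ φ : M →* K,
        ∑ a ∈ f.support.filter (fun a => chiHom M a = φ), coeff a f = 0 := by
      intro φ
      have := congrArg (fun g : (M →* K) →₀ K => g φ) hc
      simp only [hcdef, Finsupp.coe_finset_sum, Finset.sum_apply,
        Finsupp.single_apply, Finsupp.coe_zero, Pi.zero_apply] at this
      rwa [Finset.sum_filter]
    -- representative choice
    set rep : (M →* K) → (Fin s →₀ ℕ) :=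
      fun φ => if h : ∃ a, chiHom M a = φ then h.choose else 0 with hrepdef
    have hrep : ∀ a : Fin s →₀ ℕ, chiHom M (rep (chiHom M a)) = chiHom M a := by
      intro a
      have h : ∃ b, chiHom M b = chiHom M a := ⟨a, rfl⟩
      simp only [hrepdef, dif_pos h]
      exact h.choose_spec
    -- decomposition of f
    have hdecomp : f = ∑ a ∈ f.support,
        coeff a f • (monomial a (1 : K) - monomial (rep (chiHom M a)) 1) := by
      have h2 : ∑ a ∈ f.support, coeff a f • monomial (rep (chiHom M a)) (1 : K) = 0 := by
        rw [← Finset.sum_fiberwise_of_maps_to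
          (g := fun a => chiHom M a) (t := f.support.image (fun a => chiHom M a))
          (fun a ha => Finset.mem_image_of_mem _ ha)]
        refine Finset.sum_eq_zero fun φ _ => ?_
        have : ∀ a ∈ f.support.filter (fun a => chiHom M a = φ),
            coeff a f • monomial (rep (chiHom M a)) (1 : K)
              = coeff a f • monomial (rep φ) (1 : K) := by
          intro a ha
          rw [(Finset.mem_filter.mp ha).2]
        rw [Finset.sum_congr rfl this, ← Finset.sum_smul, hclass φ, zero_smul]
      calc f = ∑ a ∈ f.support, monomial a (coeff a f) := f.as_sum
        _ = ∑ a ∈ f.support, coeff a f • monomial a (1 : K) := by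
            refine Finset.sum_congr rfl fun a _ => ?_
            rw [smul_monomial, smul_eq_mul, mul_one]
        _ = _ := by
            simp only [smul_sub, Finset.sum_sub_distrib, h2, sub_zero]
    rw [hdecomp]
    refine Ideal.sum_mem _ fun a ha => ?_
    rw [smul_eq_C_mul]
    exact Ideal.mul_mem_left _ _
      (Ideal.subset_span ⟨a, rep (chiHom M a), rfl, (hrep a).symm⟩)
  · rw [Ideal.span_le]
    intro f hf
    obtain ⟨a, b, rfl, hab⟩ := hf
    apply Ideal.subset_span
    intro α hα
    have := congrArg (fun φ : M →* K => φ ⟨α, hα⟩) hab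
    simp only [chiHom, MonoidHom.coe_mk, OneHom.coe_mk] at this
    simp [map_sub, this]
end
end

section
/- Let Y be a submonoid of Kˢ under componentwise multiplication and let τ ∈ K*. If binomials t^{b_i} − t^{c_i}, i = 1,...,r, generate the vanishing ideal I(Y), then the non-pure binomials t^{b_i}/τ^{|b_i|} − t^{c_i}/τ^{|c_i|}, i = 1,...,r, generate I(τY), where τY = {τy : y ∈ Y} and |a| = a₁ + ⋯ + aₛ. -/
open MvPolynomial

noncomputable section

variable {K : Type} [Field K] {s : ℕ}

def vIdeal (Y : Set (Fin s → K)) : Ideal (MvPolynomial (Fin s) K) where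
  carrier := {f | ∀ α ∈ Y, eval α f = 0}
  add_mem' := fun hf hg α hα => by simp [hf α hα, hg α hα]
  zero_mem' := fun α hα => by simp
  smul_mem' := fun c f hf α hα => by simp [smul_eq_mul, hf α hα]

lemma mem_affineVI {Y : Set (Fin s → K)} {f : MvPolynomial (Fin s) K} :
    f ∈ Ideal.span {f : MvPolynomial (Fin s) K | ∀ α ∈ Y, eval α f = 0} ↔
      ∀ α ∈ Y, eval α f = 0 := by
  have : {f : MvPolynomial (Fin s) K | ∀ α ∈ Y, eval α f = 0} = (vIdeal Y : Set _) := rfl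
  rw [this, Ideal.span_eq]; rfl

def scaleEquiv (τ : K) (hτ : τ ≠ 0) :
    MvPolynomial (Fin s) K ≃ₐ[K] MvPolynomial (Fin s) K :=
  AlgEquiv.ofAlgHom (aeval fun i => C τ * X i) (aeval fun i => C τ⁻¹ * X i)
    (by ext i : 1
        simp only [AlgHom.coe_comp, Function.comp_apply, aeval_X, map_mul, aeval_C,
          algebraMap_eq, AlgHom.coe_id, id_eq]
        rw [← mul_assoc, ← C_mul, inv_mul_cancel₀ hτ, C_1, one_mul])
    (by ext i : 1
        simp only [AlgHom.coe_comp, Function.comp_apply, aeval_X, map_mul, aeval_C,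
          algebraMap_eq, AlgHom.coe_id, id_eq]
        rw [← mul_assoc, ← C_mul, mul_inv_cancel₀ hτ, C_1, one_mul])

lemma eval_scaleEquiv (τ : K) (hτ : τ ≠ 0) (α : Fin s → K) (f : MvPolynomial (Fin s) K) :
    eval α (scaleEquiv τ hτ f) = eval (τ • α) f := by
  show eval α (aeval (fun i => C τ * X i) f) = _
  induction f using MvPolynomial.induction_on with
  | C a => simp
  | add p q hp hq => simp only [map_add, hp, hq]
  | mul_X p i hp =>
      rw [map_mul, aeval_X, map_mul, map_mul, eval_C, eval_X, hp, map_mul, eval_X,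
        Pi.smul_apply, smul_eq_mul]

lemma aeval_scale_monomial (u : K) (a : Fin s →₀ ℕ) (k : K) :
    aeval (fun i => C u * X i) (monomial a k) =
      monomial a (k * u ^ (a.sum fun _ n => n)) := by
  rw [monomial_eq, monomial_eq, map_mul, aeval_C]
  simp only [Finsupp.prod, map_prod]
  simp only [map_pow, aeval_X, mul_pow]
  rw [Finset.prod_mul_distrib, Finset.prod_pow_eq_pow_sum, ← C_pow]
  rw [show (a.sum fun _ n => n) = ∑ i ∈ a.support, a i from rfl]
  rw [algebraMap_eq, C_mul]; ring

lemma scaleEquiv_symm_monomial (τ : K) (hτ : τ ≠ 0) (a : Fin s →₀ ℕ) :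
    (scaleEquiv τ hτ).symm (monomial a 1) =
      monomial a ((τ ^ (a.sum fun _ n => n))⁻¹) := by
  show aeval (fun i => C τ⁻¹ * X i) (monomial a 1) = _
  rw [aeval_scale_monomial, one_mul, inv_pow]


theorem scaled_monoid_nonpure_binomial (Y : Set (Fin s → K))
    (h1 : (1 : Fin s → K) ∈ Y)
    (hmul : ∀ a ∈ Y, ∀ b ∈ Y, a * b ∈ Y)
    (τ : K) (hτ : τ ≠ 0) {r : ℕ} (b c : Fin r → (Fin s →₀ ℕ))
    (hgen : affineVanishingIdeal Y =
      Ideal.span (Set.range fun i => (monomial (b i) 1 - monomial (c i) 1 :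
        MvPolynomial (Fin s) K))) :
    affineVanishingIdeal ((fun y => τ • y) '' Y) =
      Ideal.span (Set.range fun i =>
        (monomial (b i) ((τ ^ ((b i).sum fun _ n => n))⁻¹) -
         monomial (c i) ((τ ^ ((c i).sum fun _ n => n))⁻¹) :
          MvPolynomial (Fin s) K)) := by
  unfold affineVanishingIdeal at hgen ⊢
  set e := (scaleEquiv τ hτ : MvPolynomial (Fin s) K ≃ₐ[K] MvPolynomial (Fin s) K).toRingEquiv
  have hcomap : Ideal.span {f : MvPolynomial (Fin s) K | ∀ α ∈ (fun y => τ • y) '' Y, eval α f = 0}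
      = Ideal.comap e (Ideal.span {f : MvPolynomial (Fin s) K | ∀ α ∈ Y, eval α f = 0}) := by
    ext f
    rw [Ideal.mem_comap, mem_affineVI, mem_affineVI]
    constructor
    · intro h α hα
      rw [show e f = scaleEquiv τ hτ f from rfl, eval_scaleEquiv]
      exact h _ ⟨α, hα, rfl⟩
    · rintro h _ ⟨α, hα, rfl⟩
      rw [← eval_scaleEquiv τ hτ]
      exact h α hα
  rw [hcomap, hgen, ← Ideal.map_symm, Ideal.map_span, ← Set.range_comp]
  have hfun : (⇑e.symm ∘ fun i => (monomial (b i) 1 - monomial (c i) 1 :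
      MvPolynomial (Fin s) K)) = fun i =>
      (monomial (b i) ((τ ^ ((b i).sum fun _ n => n))⁻¹) -
       monomial (c i) ((τ ^ ((c i).sum fun _ n => n))⁻¹) : MvPolynomial (Fin s) K) := by
    funext i
    show (scaleEquiv τ hτ).symm _ = _
    rw [map_sub, scaleEquiv_symm_monomial, scaleEquiv_symm_monomial]
  rw [hfun]
end
end

section
/- Let 𝕐 be a subset of projective space ℙ^{s−1} over a field K such that the equivalence class of (1,...,1) lies in 𝕐 and such that for all [α], [β] ∈ 𝕐 with componentwise product α·β ≠ 0, the class [α·β] lies in 𝕐. Then the graded vanishing ideal I(𝕐) ⊆ K[t₁,...,tₛ] is generated by binomials. -/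
open MvPolynomial

noncomputable section

variable {K : Type} [Field K] {s : ℕ}

namespace PMBAux
variable (Y : Set (Projectivization K (Fin s → K)))

def Vanishes (f : MvPolynomial (Fin s) K) : Prop :=
  ∀ (α : Fin s → K) (hα : α ≠ 0), Projectivization.mk K α hα ∈ Y → eval α f = 0

def MEquiv (a b : Fin s →₀ ℕ) : Prop :=
  ∀ (α : Fin s → K) (hα : α ≠ 0), Projectivization.mk K α hα ∈ Y →
    eval α (monomial a (1 : K)) = eval α (monomial b (1 : K))

lemma isHom_iff (f : MvPolynomial (Fin s) K) (n : ℕ) :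
    f.IsHomogeneous n ↔ ∀ d, coeff d f ≠ 0 → Finsupp.degree d = n := by
  rw [Finsupp.degree_eq_weight_one]; rfl

lemma one_ne_zero' (hs : 0 < s) : (1 : Fin s → K) ≠ 0 := by
  intro h; have := congrFun h ⟨0, hs⟩; simp at this

lemma eval_mul_monomial (ξ η : Fin s → K) (a : Fin s →₀ ℕ) :
    eval (ξ * η) (monomial a (1 : K)) =
      eval ξ (monomial a (1 : K)) * eval η (monomial a (1 : K)) := by
  simp only [eval_monomial, one_mul, Finsupp.prod, Pi.mul_apply, mul_pow,
    Finset.prod_mul_distrib]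

lemma eval_eq_sum_support (η : Fin s → K) (f : MvPolynomial (Fin s) K) :
    eval η f = ∑ a ∈ f.support, coeff a f * eval η (monomial a (1 : K)) := by
  conv_lhs => rw [f.as_sum]
  rw [map_sum]
  exact Finset.sum_congr rfl fun a _ => by simp [eval_monomial]

lemma indep (hs : 0 < s)
    (h1 : ∀ hone : (1 : Fin s → K) ≠ 0, Projectivization.mk K 1 hone ∈ Y)
    (hmul : ∀ (α β : Fin s → K) (hα : α ≠ 0) (hβ : β ≠ 0),
      Projectivization.mk K α hα ∈ Y → Projectivization.mk K β hβ ∈ Y →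
      ∀ hab : α * β ≠ 0, Projectivization.mk K (α * β) hab ∈ Y) :
    ∀ (N : ℕ) (f : MvPolynomial (Fin s) K) (n : ℕ), f.support.card ≤ N →
      f.IsHomogeneous n → Vanishes Y f →
      (∀ a ∈ f.support, ∀ b ∈ f.support, a ≠ b → ¬ MEquiv Y a b) → f = 0 := by
  intro N
  induction N with
  | zero =>
    intro f n hcard _ _ _
    rw [← support_eq_empty]
    exact Finset.card_eq_zero.mp (le_antisymm hcard (Nat.zero_le _))
  | succ N IH =>
    intro f n hcard hhom hvan hpair
    by_contra hf0
    obtain ⟨a₁, ha₁⟩ := support_nonempty.mpr hf0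
    by_cases hone : ∀ b ∈ f.support, b = a₁
    · -- support is a singleton; evaluate at the all-ones point
      have hsupp : f.support = {a₁} :=
        Finset.eq_singleton_iff_unique_mem.mpr ⟨ha₁, hone⟩
      have h1K := one_ne_zero' (K := K) hs
      have hv := hvan 1 h1K (h1 h1K)
      rw [eval_eq_sum_support, hsupp, Finset.sum_singleton] at hv
      simp [eval_monomial] at hv
      exact (mem_support_iff.mp ha₁) hv
    · push_neg at hone
      obtain ⟨a₂, ha₂, hne⟩ := hone
      have hnE := hpair a₂ ha₂ a₁ ha₁ hne
      rw [MEquiv] at hnE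
      push_neg at hnE
      obtain ⟨ξ, hξ0, hξY, hξne⟩ := hnE
      -- degree n is positive
      have hdeg : ∀ a ∈ f.support, Finsupp.degree a = n := fun a ha =>
        (isHom_iff f n).mp hhom a (mem_support_iff.mp ha)
      have hn0 : n ≠ 0 := by
        intro h0
        apply hne
        have h2 : a₂ = 0 := (Finsupp.degree_eq_zero_iff a₂).mp (h0 ▸ hdeg a₂ ha₂)
        have h1' : a₁ = 0 := (Finsupp.degree_eq_zero_iff a₁).mp (h0 ▸ hdeg a₁ ha₁)
        rw [h2, h1']
      set E : (Fin s →₀ ℕ) → K := fun a => eval ξ (monomial a (1 : K)) with hE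
      set h : MvPolynomial (Fin s) K :=
        ∑ a ∈ f.support, monomial a (coeff a f * (E a₁ - E a)) with hh
      have hcoeff : ∀ x, coeff x h = coeff x f * (E a₁ - E x) := by
        intro x
        rw [hh, coeff_sum]
        simp only [coeff_monomial]
        rw [Finset.sum_ite_eq' f.support x (fun a => coeff a f * (E a₁ - E a))]
        by_cases hx : x ∈ f.support
        · rw [if_pos hx]
        · rw [if_neg hx]
          rw [mem_support_iff, not_not] at hx
          rw [hx, zero_mul]
      have hsub : h.support ⊆ f.support.erase a₁ := by
        intro x hx
        rw [mem_support_iff, hcoeff] at hx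
        rw [Finset.mem_erase, mem_support_iff]
        constructor
        · rintro rfl; simp at hx
        · intro h'; rw [h', zero_mul] at hx; exact hx rfl
      have hhom' : h.IsHomogeneous n := by
        rw [isHom_iff]
        intro d hd
        rw [hcoeff] at hd
        exact hdeg d (mem_support_iff.mpr fun h' => hd (by rw [h', zero_mul]))
      have hvan' : Vanishes Y h := by
        intro η hη hηY
        have hexp : eval η h = E a₁ * eval η f - eval (ξ * η) f := by
          rw [hh, map_sum]
          have hterm : ∀ a ∈ f.support,
              eval η (monomial a (coeff a f * (E a₁ - E a)))
                = E a₁ * (coeff a f * eval η (monomial a (1 : K)))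
                  - coeff a f * eval (ξ * η) (monomial a (1 : K)) := by
            intro a _
            rw [eval_mul_monomial, hE]
            simp only [eval_monomial, one_mul]
            ring
          rw [Finset.sum_congr rfl hterm, Finset.sum_sub_distrib, ← Finset.mul_sum,
            ← eval_eq_sum_support, ← eval_eq_sum_support]
        rw [hexp, hvan η hη hηY, mul_zero, zero_sub, neg_eq_zero]
        by_cases hz : ξ * η = 0
        · rw [eval_eq_sum_support]
          apply Finset.sum_eq_zero
          intro a ha
          have han : a ≠ 0 := fun h' =>
            hn0 (by rw [← hdeg a ha, h', map_zero])
          obtain ⟨i, hi⟩ := Finsupp.support_nonempty_iff.mpr han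
          rw [eval_monomial, one_mul, Finsupp.prod, hz]
          rw [Finset.prod_eq_zero hi (by
            simp [zero_pow (Finsupp.mem_support_iff.mp hi)]), mul_zero]
        · exact hvan (ξ * η) hz (hmul ξ η hξ0 hη hξY hηY hz)
      have hcard' : h.support.card ≤ N := by
        have h1' : h.support.card ≤ (f.support.erase a₁).card :=
          Finset.card_le_card hsub
        have h2' : (f.support.erase a₁).card < f.support.card :=
          Finset.card_erase_lt_of_mem ha₁
        omega
      have hpair' : ∀ a ∈ h.support, ∀ b ∈ h.support, a ≠ b → ¬ MEquiv Y a b :=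
        fun a ha b hb => hpair a (Finset.mem_of_mem_erase (hsub ha))
          b (Finset.mem_of_mem_erase (hsub hb))
      have h0 : h = 0 := IH h n hcard' hhom' hvan' hpair'
      have hc2 := hcoeff a₂
      rw [h0, coeff_zero] at hc2
      rcases mul_eq_zero.mp hc2.symm with hc | hc
      · exact mem_support_iff.mp ha₂ hc
      · exact hξne (sub_eq_zero.mp hc).symm
def BSet : Set (MvPolynomial (Fin s) K) :=
  {g | ∃ a b : Fin s →₀ ℕ, g = monomial a (1 : K) - monomial b (1 : K) ∧
    a.degree = b.degree ∧ MEquiv Y a b}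

lemma mem_span (hs : 0 < s)
    (h1 : ∀ hone : (1 : Fin s → K) ≠ 0, Projectivization.mk K 1 hone ∈ Y)
    (hmul : ∀ (α β : Fin s → K) (hα : α ≠ 0) (hβ : β ≠ 0),
      Projectivization.mk K α hα ∈ Y → Projectivization.mk K β hβ ∈ Y →
      ∀ hab : α * β ≠ 0, Projectivization.mk K (α * β) hab ∈ Y) :
    ∀ (N : ℕ) (f : MvPolynomial (Fin s) K) (n : ℕ), f.support.card ≤ N →
      f.IsHomogeneous n → Vanishes Y f → f ∈ Ideal.span (BSet Y) := by
  intro N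
  induction N with
  | zero =>
    intro f n hcard _ _
    have : f = 0 := by
      rw [← support_eq_empty]
      exact Finset.card_eq_zero.mp (le_antisymm hcard (Nat.zero_le _))
    rw [this]; exact zero_mem _
  | succ N IH =>
    intro f n hcard hhom hvan
    by_cases hpair : ∀ a ∈ f.support, ∀ b ∈ f.support, a ≠ b → ¬ MEquiv Y a b
    · rw [indep Y hs h1 hmul (N + 1) f n hcard hhom hvan hpair]
      exact zero_mem _
    · push_neg at hpair
      obtain ⟨a, ha, b, hb, hab, hEq⟩ := hpair
      set g : MvPolynomial (Fin s) K := monomial a (1 : K) - monomial b (1 : K) with hg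
      have hdeg : ∀ x ∈ f.support, Finsupp.degree x = n := fun x hx =>
        (isHom_iff f n).mp hhom x (mem_support_iff.mp hx)
      have hgB : g ∈ BSet Y :=
        ⟨a, b, rfl, by rw [hdeg a ha, hdeg b hb], hEq⟩
      set f' : MvPolynomial (Fin s) K := f - coeff a f • g with hf'
      have hcoeff : ∀ x, coeff x f' =
          coeff x f - coeff a f * (coeff x (monomial a (1 : K)) - coeff x (monomial b (1 : K))) := by
        intro x
        rw [hf', coeff_sub, coeff_smul, hg, coeff_sub]
        simp [smul_eq_mul]
      have hsub : f'.support ⊆ f.support.erase a := by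
        intro x hx
        rw [mem_support_iff, hcoeff] at hx
        rw [Finset.mem_erase, mem_support_iff]
        constructor
        · rintro rfl
          rw [coeff_monomial, if_pos rfl, coeff_monomial, if_neg (fun h => hab h.symm)] at hx
          simp at hx
        · intro h'
          apply hx
          by_cases hxb : x = b
          · exfalso; rw [hxb] at h'; exact mem_support_iff.mp hb h'
          · have hxa : x ≠ a := by
              intro hxa; rw [hxa] at h'; exact mem_support_iff.mp ha h'
            rw [h', coeff_monomial, coeff_monomial, if_neg (fun hh => hxa hh.symm),
              if_neg (fun hh => hxb hh.symm)]
            ring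
      have hcard' : f'.support.card ≤ N := by
        have h1' := Finset.card_le_card hsub
        have h2' := Finset.card_erase_lt_of_mem ha
        omega
      have hhom' : f'.IsHomogeneous n := by
        rw [isHom_iff]
        intro d hd
        exact hdeg d (Finset.mem_of_mem_erase (hsub (mem_support_iff.mpr hd)))
      have hvan' : Vanishes Y f' := by
        intro α hα hαY
        rw [hf', map_sub, hvan α hα hαY, smul_eq_C_mul, map_mul, hg, map_sub,
          hEq α hα hαY, sub_self, mul_zero, sub_zero]
      have hmem := IH f' n hcard' hhom' hvan'
      have : f = f' + coeff a f • g := by rw [hf']; ring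
      rw [this]
      refine add_mem hmem ?_
      rw [smul_eq_C_mul]
      exact Ideal.mul_mem_left _ _ (Ideal.subset_span hgB)

end PMBAux

theorem proj_monoid_binomial (hs : 0 < s) (Y : Set (Projectivization K (Fin s → K)))
    (h1 : ∀ hone : (1 : Fin s → K) ≠ 0, Projectivization.mk K 1 hone ∈ Y)
    (hmul : ∀ (α β : Fin s → K) (hα : α ≠ 0) (hβ : β ≠ 0),
      Projectivization.mk K α hα ∈ Y → Projectivization.mk K β hβ ∈ Y →
      ∀ hab : α * β ≠ 0, Projectivization.mk K (α * β) hab ∈ Y) :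
    IsBinomialIdeal (projVanishingIdeal Y) := by
  refine ⟨PMBAux.BSet Y, ?_, ?_⟩
  · rintro g ⟨a, b, rfl, -, -⟩
    exact ⟨a, b, rfl⟩
  · refine le_antisymm ?_ ?_
    · rw [projVanishingIdeal]
      apply Ideal.span_le.mpr
      rintro f ⟨⟨n, hn⟩, hvan⟩
      exact PMBAux.mem_span Y hs h1 hmul f.support.card f n le_rfl hn hvan
    · apply Ideal.span_le.mpr
      rintro g ⟨a, b, rfl, hdeg, hequiv⟩
      apply Ideal.subset_span
      refine ⟨⟨a.degree, ?_⟩, fun α hα hY => ?_⟩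
      · exact (isHomogeneous_monomial _ rfl).sub (isHomogeneous_monomial _ hdeg.symm)
      · rw [map_sub, hequiv α hα hY, sub_self]

end
end

section
/- Let 𝕐 ⊆ ℙ^{s−1} over a field K. If the graded vanishing ideal I(𝕐) is generated by binomials, then V(I(𝕐)) ∪ {[0]}, the projective zero set of I(𝕐) together with an added zero element, is closed under componentwise multiplication and contains [(1,...,1)]; that is, it is a submonoid of ℙ^{s−1} ∪ {[0]}. -/
open MvPolynomial

noncomputable section

variable {K : Type} [Field K] {s : ℕ}

attribute [local instance] MvPolynomial.gradedAlgebra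

/-- An ideal spanned by homogeneous elements contains homogeneous components of its
elements. -/
lemma aux_graded {S : Set (MvPolynomial (Fin s) K)}
    (hS : ∀ f ∈ S, ∃ n, f.IsHomogeneous n) :
    ∀ f ∈ Ideal.span S, ∀ n, homogeneousComponent n f ∈ Ideal.span S := by
  have h : Ideal.IsHomogeneous (homogeneousSubmodule (Fin s) K) (Ideal.span S) :=
    Ideal.homogeneous_span _ _ (fun x hx => (hS x hx).imp (fun n hn => hn))
  intro f hf n
  have h2 := h n hf
  rwa [show ((DirectSum.decompose (homogeneousSubmodule (Fin s) K) f n :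
      homogeneousSubmodule (Fin s) K n) : MvPolynomial (Fin s) K)
      = homogeneousComponent n f from MvPolynomial.decomposition.decompose'_apply f n] at h2

lemma aux_eval_all {I : Ideal (MvPolynomial (Fin s) K)}
    (hgr : ∀ f ∈ I, ∀ n, homogeneousComponent n f ∈ I)
    (α : Fin s → K)
    (hv : ∀ f ∈ I, (∃ n, f.IsHomogeneous n) → eval α f = 0) :
    ∀ f ∈ I, eval α f = 0 := by
  intro f hf
  rw [← sum_homogeneousComponent f, map_sum]
  apply Finset.sum_eq_zero
  intro i _
  exact hv _ (hgr f hf i) ⟨i, homogeneousComponent_isHomogeneous i f⟩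

lemma aux_eval_smul {f : MvPolynomial (Fin s) K} {n : ℕ} (hf : f.IsHomogeneous n)
    (c : K) (x : Fin s → K) : eval (c • x) f = c ^ n * eval x f := by
  rw [eval_eq', eval_eq', Finset.mul_sum]
  apply Finset.sum_congr rfl
  intro d hd
  have hc := mem_support_iff.mp hd
  have hdeg : ∑ i, d i = n := by
    have h1 : d.degree = n := by
      rw [Finsupp.degree_eq_weight_one]
      exact hf hc
    rw [← h1, Finsupp.degree]
    exact (Finset.sum_subset (Finset.subset_univ d.support)
        (fun i _ hi => Finsupp.notMem_support_iff.mp hi)).symm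
  have : ∏ i, (c • x) i ^ d i = c ^ n * ∏ i, x i ^ d i := by
    simp only [Pi.smul_apply, smul_eq_mul, mul_pow]
    rw [Finset.prod_mul_distrib, Finset.prod_pow_eq_pow_sum, hdeg]
  rw [this]; ring

lemma aux_eval_span_zero {B : Set (MvPolynomial (Fin s) K)} {α : Fin s → K}
    (hb : ∀ b ∈ B, eval α b = 0) : ∀ f ∈ Ideal.span B, eval α f = 0 := by
  intro f hf
  have hle : Ideal.span B ≤ RingHom.ker (eval α) := Ideal.span_le.mpr hb
  exact hle hf

lemma aux_eval_monomial_mul (a : Fin s →₀ ℕ) (α β : Fin s → K) :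
    eval (α * β) (monomial a (1 : K)) = eval α (monomial a 1) * eval β (monomial a 1) := by
  simp only [eval_monomial, one_mul, Finsupp.prod]
  rw [← Finset.prod_mul_distrib]
  exact Finset.prod_congr rfl fun i _ => by simp [mul_pow]

theorem binomial_implies_zeroset_monoid (hs : 0 < s)
    (Y : Set (Projectivization K (Fin s → K)))
    (h : IsBinomialIdeal (projVanishingIdeal Y)) :
    IsProjSubmonoid (projZeroSet (projVanishingIdeal Y)) := by
  obtain ⟨B, hB, hIB⟩ := h
  have hgr : ∀ f ∈ projVanishingIdeal Y, ∀ n,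
      homogeneousComponent n f ∈ projVanishingIdeal Y :=
    aux_graded (fun f hf => hf.1)
  -- every binomial generator vanishes wherever all of I vanishes (on reps of points in Z)
  have key : ∀ (γ : Fin s → K) (hγ : γ ≠ 0),
      Projectivization.mk K γ hγ ∈ projZeroSet (projVanishingIdeal Y) →
      ∀ f ∈ projVanishingIdeal Y, eval γ f = 0 := by
    intro γ hγ hmem
    exact aux_eval_all hgr γ (fun f hf hhom => hmem f hf hhom γ hγ rfl)
  constructor
  · -- the identity point is in the zero set
    intro h1 f hf hhom α hα hmk
    obtain ⟨n, hn⟩ := hhom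
    obtain ⟨c, hc⟩ := (Projectivization.mk_eq_mk_iff K α 1 hα h1).mp hmk
    have h1eval : eval (1 : Fin s → K) f = 0 := by
      refine aux_eval_span_zero (fun b hb => ?_) f (hIB ▸ hf)
      obtain ⟨a, a', rfl⟩ := hB b hb
      simp [eval_monomial, Finsupp.prod]
    have : (c : K) • (1 : Fin s → K) = α := hc
    rw [← this, aux_eval_smul hn, h1eval, mul_zero]
  · intro α β hα hβ hmα hmβ hab f hf hhom γ hγ hmk
    obtain ⟨n, hn⟩ := hhom
    obtain ⟨c, hc⟩ := (Projectivization.mk_eq_mk_iff K γ (α * β) hγ hab).mp hmk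
    have hprod : eval (α * β) f = 0 := by
      refine aux_eval_span_zero (fun b hb => ?_) f (hIB ▸ hf)
      obtain ⟨a, a', rfl⟩ := hB b hb
      have hbI : (monomial a 1 - monomial a' 1 : MvPolynomial (Fin s) K)
          ∈ projVanishingIdeal Y := hIB ▸ Ideal.subset_span hb
      have hαe := key α hα hmα _ hbI
      have hβe := key β hβ hmβ _ hbI
      rw [map_sub] at hαe hβe ⊢
      rw [sub_eq_zero] at hαe hβe
      rw [aux_eval_monomial_mul, aux_eval_monomial_mul, hαe, hβe, sub_self]
    have : (c : K) • (α * β) = γ := hc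
    rw [← this, aux_eval_smul hn, hprod, mul_zero]
end
end

section
/- Let K be a field and Y ⊆ Kˢ. The vanishing ideal I(Y) is a binomial ideal if and only if V(I(Y)) is a submonoid of Kˢ under componentwise multiplication. -/
open MvPolynomial

noncomputable section

variable {K : Type} [Field K] {s : ℕ}

lemma mem_affineVanishingIdeal (Y : Set (Fin s → K)) (f : MvPolynomial (Fin s) K) :
    f ∈ affineVanishingIdeal Y ↔ ∀ α ∈ Y, eval α f = 0 := by
  have h : {f : MvPolynomial (Fin s) K | ∀ α ∈ Y, eval α f = 0}
      = ↑(⨅ α ∈ Y, RingHom.ker (eval α : MvPolynomial (Fin s) K →+* K)) := by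
    ext g
    simp [Ideal.mem_iInf, RingHom.mem_ker]
  rw [affineVanishingIdeal, h, Ideal.span_eq]
  simp [Ideal.mem_iInf, RingHom.mem_ker]

lemma eval_monomial_mul (α β : Fin s → K) (d : Fin s →₀ ℕ) :
    eval (α * β) (monomial d (1:K)) = eval α (monomial d 1) * eval β (monomial d 1) := by
  simp [eval_monomial, Finsupp.prod, Finset.prod_mul_distrib, mul_pow]

def monChar (M : Submonoid (Fin s → K)) (a : Fin s →₀ ℕ) : M →* K where
  toFun α := a.prod fun i k => (α : Fin s → K) i ^ k
  map_one' := by simp [Finsupp.prod]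
  map_mul' α β := by
    simp [Finsupp.prod, mul_pow, Finset.prod_mul_distrib]

lemma eval_monomial_eq_monChar (M : Submonoid (Fin s → K)) (a : Fin s →₀ ℕ) (α : M) :
    eval (α : Fin s → K) (monomial a (1:K)) = monChar M a α := by
  simp [eval_monomial, monChar]

open Classical in
lemma class_sum_zero (M : Submonoid (Fin s → K)) (f : MvPolynomial (Fin s) K)
    (hf : ∀ α : M, eval (α : Fin s → K) f = 0) (a : Fin s →₀ ℕ) :
    ∑ b ∈ f.support.filter (fun b => monChar M b = monChar M a), coeff b f = 0 := by
  classical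
  by_cases hne : (f.support.filter (fun b => monChar M b = monChar M a)).Nonempty
  · have hli : LinearIndependent K (fun ψ : M →* K => (ψ : M → K)) :=
      linearIndependent_monoidHom M K
    set g : (M →* K) → K := fun ψ =>
      ∑ b ∈ f.support.filter (fun b => monChar M b = ψ), coeff b f with hg
    have key : ∑ ψ ∈ f.support.image (monChar M), g ψ • (ψ : M → K) = 0 := by
      rw [Finset.sum_image' (fun b => coeff b f • ((monChar M b : M →* K) : M → K))]
      · funext α
        simp only [Finset.sum_apply, Pi.smul_apply, Pi.zero_apply, smul_eq_mul]
        have := hf α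
        rw [eval_eq] at this
        rw [← this]
        apply Finset.sum_congr rfl
        intro b _
        rw [← eval_monomial_eq_monChar M b α, eval_monomial, one_mul, Finsupp.prod]
      · intro c hc
        rw [hg]
        rw [Finset.sum_smul]
        apply Finset.sum_congr rfl
        intro b hb
        have : monChar M b = monChar M c := (Finset.mem_filter.mp hb).2
        rw [this]
    have := linearIndependent_iff'.mp hli (f.support.image (monChar M)) g key (monChar M a)
    apply this
    obtain ⟨b, hb⟩ := hne
    rw [Finset.mem_filter] at hb
    rw [← hb.2]
    exact Finset.mem_image_of_mem _ hb.1
  · rw [Finset.not_nonempty_iff_eq_empty] at hne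
    rw [hne, Finset.sum_empty]

theorem classification_binomial_affine (Y : Set (Fin s → K)) :
    IsBinomialIdeal (affineVanishingIdeal Y) ↔
      ((1 : Fin s → K) ∈ affineZeroSet (affineVanishingIdeal Y) ∧
        ∀ a ∈ affineZeroSet (affineVanishingIdeal Y),
          ∀ b ∈ affineZeroSet (affineVanishingIdeal Y),
            a * b ∈ affineZeroSet (affineVanishingIdeal Y)) := by
  classical
  set I := affineVanishingIdeal Y with hI
  set Z := affineZeroSet I with hZdef
  have hmemZ : ∀ α : Fin s → K, α ∈ Z ↔ ∀ f ∈ I, eval α f = 0 := fun α => Iff.rfl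
  constructor
  · rintro ⟨B, hB, hIB⟩
    have hgen : ∀ α : Fin s → K, (∀ g ∈ B, eval α g = 0) → α ∈ Z := by
      intro α hα f hf
      rw [hIB] at hf
      have : Ideal.span B ≤ RingHom.ker (eval α : MvPolynomial (Fin s) K →+* K) := by
        rw [Ideal.span_le]
        intro g hg
        exact hα g hg
      exact this hf
    have hBI : ∀ g ∈ B, g ∈ I := by
      intro g hg; rw [hIB]; exact Ideal.subset_span hg
    constructor
    · apply hgen
      intro g hg
      obtain ⟨a, b, rfl⟩ := hB g hg
      simp [eval_monomial, Finsupp.prod]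
    · intro α hα β hβ
      apply hgen
      intro g hg
      obtain ⟨a, b, rfl⟩ := hB g hg
      have h1 : eval α (monomial a (1:K)) = eval α (monomial b 1) := by
        have := hα _ (hBI _ hg)
        rw [map_sub, sub_eq_zero] at this; exact this
      have h2 : eval β (monomial a (1:K)) = eval β (monomial b 1) := by
        have := hβ _ (hBI _ hg)
        rw [map_sub, sub_eq_zero] at this; exact this
      rw [map_sub, eval_monomial_mul, eval_monomial_mul, h1, h2, sub_self]
  · rintro ⟨h1, hmul⟩
    set M : Submonoid (Fin s → K) :=
      { carrier := Z
        one_mem' := h1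
        mul_mem' := fun ha hb => hmul _ ha _ hb } with hM
    have hYZ : Y ⊆ Z := by
      intro α hα f hf
      exact (mem_affineVanishingIdeal Y f).mp hf α hα
    have hvan : ∀ f, f ∈ I ↔ ∀ α : M, eval (α : Fin s → K) f = 0 := by
      intro f
      constructor
      · intro hf α
        exact α.2 f hf
      · intro hf
        rw [hI, mem_affineVanishingIdeal]
        intro α hα
        exact hf ⟨α, hYZ hα⟩
    set B : Set (MvPolynomial (Fin s) K) :=
      {g | (∃ a b : Fin s →₀ ℕ, g = monomial a 1 - monomial b 1) ∧ g ∈ I} with hBdef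
    have hBI : Ideal.span B ≤ I := by
      rw [Ideal.span_le]; intro g hg; exact hg.2
    refine ⟨B, fun g hg => hg.1, le_antisymm ?_ hBI⟩
    -- I ≤ span B
    suffices main : ∀ n (f : MvPolynomial (Fin s) K),
        f.support.card ≤ n → f ∈ I → f ∈ Ideal.span B by
      intro f hf
      exact main f.support.card f le_rfl hf
    intro n
    induction n with
    | zero =>
      intro f hcard _
      have : f = 0 := by
        have := Finset.card_eq_zero.mp (Nat.le_zero.mp hcard)
        rwa [MvPolynomial.support_eq_empty] at this
      rw [this]; exact zero_mem _
    | succ n ih =>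
      intro f hcard hf
      by_cases hf0 : f = 0
      · rw [hf0]; exact zero_mem _
      · obtain ⟨a, ha⟩ := (MvPolynomial.support_nonempty.mpr hf0)
        set T := f.support.filter (fun b => monChar M b = monChar M a) with hT
        have haT : a ∈ T := by simp [hT, ha]
        have hsum : ∑ b ∈ T, coeff b f = 0 :=
          class_sum_zero M f ((hvan f).mp hf) a
        set g : MvPolynomial (Fin s) K :=
          ∑ b ∈ T, coeff b f • (monomial b 1 - monomial a 1) with hgdef
        have hbinB : ∀ b ∈ T, (monomial b 1 - monomial a (1:K)) ∈ B := by
          intro b hb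
          refine ⟨⟨b, a, rfl⟩, ?_⟩
          rw [hvan]
          intro α
          rw [map_sub, eval_monomial_eq_monChar, eval_monomial_eq_monChar,
            (Finset.mem_filter.mp hb).2, sub_self]
        have hgB : g ∈ Ideal.span B := by
          apply Ideal.sum_mem
          intro b hb
          rw [MvPolynomial.smul_eq_C_mul]
          exact Ideal.mul_mem_left _ _ (Ideal.subset_span (hbinB b hb))
        have hgsimp : g = ∑ b ∈ T, coeff b f • monomial b (1:K) := by
          rw [hgdef]
          simp only [smul_sub]
          rw [Finset.sum_sub_distrib, ← Finset.sum_smul, hsum, zero_smul, sub_zero]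
        have hcoeffg : ∀ d, coeff d g = if d ∈ T then coeff d f else 0 := by
          intro d
          rw [hgsimp, coeff_sum]
          simp only [coeff_smul, coeff_monomial, smul_eq_mul, mul_ite, mul_one, mul_zero]
          exact Finset.sum_ite_eq' T d (fun b => coeff b f)
        have hhI : f - g ∈ I := I.sub_mem hf (hBI hgB)
        have hsupp : (f - g).support ⊆ f.support.erase a := by
          intro d hd
          rw [MvPolynomial.mem_support_iff, MvPolynomial.coeff_sub, hcoeffg] at hd
          rw [Finset.mem_erase, MvPolynomial.mem_support_iff]
          by_cases hdT : d ∈ T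
          · simp [hdT] at hd
          · rw [if_neg hdT, sub_zero] at hd
            refine ⟨fun hda => hdT (hda ▸ haT), hd⟩
        have hcard2 : (f - g).support.card ≤ n := by
          have h1' := Finset.card_le_card hsupp
          rw [Finset.card_erase_of_mem ha] at h1'
          omega
        have := ih (f - g) hcard2 hhI
        have : f - g + g ∈ Ideal.span B := Ideal.add_mem _ this hgB
        rwa [sub_add_cancel] at this
end
end

section
/- If 𝕐 is a submonoid of the projective torus T = {[x] ∈ ℙ^{s−1} : xᵢ ∈ K* for all i} under componentwise multiplication, then I(𝕐) is a lattice ideal: it is generated by binomials and each variable tᵢ is a nonzerodivisor on S/I(𝕐). -/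
open MvPolynomial

noncomputable section

variable {K : Type} [Field K] {s : ℕ}

namespace TorusLatticeAux

local instance (M : Submonoid (Fin s → K)) : DecidableEq (M →* K) := Classical.decEq _

/-- The character of the torus given by a monomial exponent. -/
def chi (M : Submonoid (Fin s → K)) (a : Fin s →₀ ℕ) : M →* K where
  toFun α := ∏ i, (α : Fin s → K) i ^ a i
  map_one' := by simp
  map_mul' x y := by
    simp only [Submonoid.coe_mul, Pi.mul_apply, mul_pow, Finset.prod_mul_distrib]

lemma eval_monomial_chi (M : Submonoid (Fin s → K)) (a : Fin s →₀ ℕ) (α : M) :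
    eval (α : Fin s → K) (monomial a (1 : K)) = chi M a α := by
  simp [eval_monomial, Finsupp.prod_pow, chi]

lemma eval_eq_sum_chi (M : Submonoid (Fin s → K)) (f : MvPolynomial (Fin s) K) (α : M) :
    eval (α : Fin s → K) f = ∑ a ∈ f.support, coeff a f * chi M a α := by
  rw [eval_eq']
  rfl

lemma class_sum_eq_zero (M : Submonoid (Fin s → K)) (f : MvPolynomial (Fin s) K)
    (hv : ∀ α : M, eval (α : Fin s → K) f = 0) (g : M →* K) :
    ∑ a ∈ f.support.filter (fun a => chi M a = g), coeff a f = 0 := by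
  have key : ∑ gg ∈ f.support.image (chi M),
      (∑ a ∈ f.support.filter (fun a => chi M a = gg), coeff a f) • ((gg : M →* K) : M → K)
        = 0 := by
    funext α
    simp only [Finset.sum_apply, Pi.smul_apply, Pi.zero_apply, smul_eq_mul]
    have : ∀ gg ∈ f.support.image (chi M), (∑ a ∈ f.support.filter (fun a => chi M a = gg), coeff a f) * gg α
        = ∑ a ∈ f.support.filter (fun a => chi M a = gg), coeff a f * chi M a α := by
      intro gg _
      rw [Finset.sum_mul]
      refine Finset.sum_congr rfl fun a ha => ?_
      rw [(Finset.mem_filter.1 ha).2]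
    rw [Finset.sum_congr rfl this,
      Finset.sum_fiberwise_of_maps_to (fun a ha => Finset.mem_image_of_mem _ ha)]
    rw [← eval_eq_sum_chi M f α, hv α]
  have li := linearIndependent_iff'.1 (linearIndependent_monoidHom M K)
    (f.support.image (chi M)) (fun gg => ∑ a ∈ f.support.filter (fun a => chi M a = gg), coeff a f) key
  by_cases hg : g ∈ f.support.image (chi M)
  · exact li g hg
  · rw [Finset.filter_false_of_mem, Finset.sum_empty]
    intro a ha hcontra
    exact hg (hcontra ▸ Finset.mem_image_of_mem _ ha)

/-- The set of homogeneous vanishing binomials. -/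
def Bset (M : Submonoid (Fin s → K)) : Set (MvPolynomial (Fin s) K) :=
  {f | (∃ a b : Fin s →₀ ℕ, f = monomial a 1 - monomial b 1) ∧ (∃ n, f.IsHomogeneous n) ∧
    ∀ α : M, eval (α : Fin s → K) f = 0}

lemma homog_vanish_mem_span (M : Submonoid (Fin s → K)) :
    ∀ (N : ℕ) (f : MvPolynomial (Fin s) K) (n : ℕ), f.support.card ≤ N →
      f.IsHomogeneous n → (∀ α : M, eval (α : Fin s → K) f = 0) →
      f ∈ Ideal.span (Bset M) := by
  classical
  intro N
  induction N with
  | zero =>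
    intro f n hcard _ _
    have : f = 0 := by
      rw [← support_eq_empty, ← Finset.card_eq_zero]
      omega
    simp [this]
  | succ N ih =>
    intro f n hcard hh hv
    by_cases h0 : f = 0
    · simp [h0]
    obtain ⟨a, ha⟩ := support_nonempty.2 h0
    have hclass := class_sum_eq_zero M f hv (chi M a)
    have haF : a ∈ f.support.filter (fun b => chi M b = chi M a) := Finset.mem_filter.2 ⟨ha, rfl⟩
    have hex : ∃ b ∈ f.support.filter (fun b => chi M b = chi M a), b ≠ a := by
      by_contra hcon
      push_neg at hcon
      have hsingle : f.support.filter (fun b => chi M b = chi M a) = {a} :=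
        Finset.eq_singleton_iff_unique_mem.2 ⟨haF, fun b hb => hcon b hb⟩
      rw [hsingle, Finset.sum_singleton] at hclass
      exact (mem_support_iff.1 ha) hclass
    obtain ⟨b, hbF, hba⟩ := hex
    have hbsup : b ∈ f.support := (Finset.mem_filter.1 hbF).1
    have hchib : chi M b = chi M a := (Finset.mem_filter.1 hbF).2
    set c := coeff a f with hc
    set bin : MvPolynomial (Fin s) K := monomial a 1 - monomial b 1 with hbin
    have hdega : a.degree = n := by
      rw [Finsupp.degree_eq_weight_one]
      exact hh (mem_support_iff.1 ha)
    have hdegb : b.degree = n := by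
      rw [Finsupp.degree_eq_weight_one]
      exact hh (mem_support_iff.1 hbsup)
    have hbinhom : bin.IsHomogeneous n :=
      (isHomogeneous_monomial _ hdega).sub (isHomogeneous_monomial _ hdegb)
    have hbinvan : ∀ α : M, eval (α : Fin s → K) bin = 0 := by
      intro α
      rw [hbin, map_sub, eval_monomial_chi, eval_monomial_chi, hchib, sub_self]
    have hbinB : bin ∈ Bset M := ⟨⟨a, b, rfl⟩, ⟨n, hbinhom⟩, hbinvan⟩
    set f' := f - c • bin with hf'
    have hcoev : ∀ d, coeff d f' = coeff d f - c * (coeff d bin) := by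
      intro d
      rw [hf', coeff_sub, coeff_smul, smul_eq_mul]
    have hcoebin : ∀ d, coeff d bin = (if a = d then (1:K) else 0) - if b = d then 1 else 0 := by
      intro d
      rw [hbin, coeff_sub, coeff_monomial, coeff_monomial]
    have hsub : f'.support ⊆ f.support.erase a := by
      intro d hd
      rw [mem_support_iff] at hd
      rw [Finset.mem_erase, mem_support_iff]
      have hda : d ≠ a := by
        rintro rfl
        apply hd
        rw [hcoev, hcoebin]
        have hbd : b ≠ d := hba
        simp [hbd, hc]
      refine ⟨hda, fun hdf => hd ?_⟩
      by_cases hdb : d = b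
      · exact absurd (hdb ▸ hdf) (mem_support_iff.1 hbsup)
      · rw [hcoev, hcoebin, hdf]
        have h1 : a ≠ d := fun h => hda h.symm
        have h2 : b ≠ d := fun h => hdb h.symm
        simp [h1, h2]
    have hcard' : f'.support.card ≤ N := by
      have h1 := Finset.card_le_card hsub
      rw [Finset.card_erase_of_mem ha] at h1
      omega
    have hhom' : f'.IsHomogeneous n := hh.sub ((mem_homogeneousSubmodule _ _).1
      (Submodule.smul_mem _ c ((mem_homogeneousSubmodule _ _).2 hbinhom)))
    have hvan' : ∀ α : M, eval (α : Fin s → K) f' = 0 := by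
      intro α
      rw [hf', map_sub, smul_eq_C_mul, map_mul, hbinvan α, mul_zero, sub_zero, hv α]
    have hf'mem := ih f' n hcard' hhom' hvan'
    have : f = f' + c • bin := by rw [hf']; ring
    rw [this]
    refine Submodule.add_mem _ hf'mem ?_
    rw [smul_eq_C_mul]
    exact Ideal.mul_mem_left _ _ (Ideal.subset_span hbinB)

lemma homogeneousComponent_mul_homog (p f : MvPolynomial (Fin s) K) (j n : ℕ)
    (hp : p.IsHomogeneous j) :
    homogeneousComponent n (p * f) =
      if j ≤ n then p * homogeneousComponent (n - j) f else 0 := by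
  classical
  conv_lhs => rw [← sum_homogeneousComponent f]
  rw [Finset.mul_sum, map_sum]
  have hterm : ∀ m, homogeneousComponent n (p * homogeneousComponent m f)
      = if n = j + m then p * homogeneousComponent m f else 0 := by
    intro m
    refine homogeneousComponent_of_mem ?_
    rw [mem_homogeneousSubmodule]
    exact hp.mul (homogeneousComponent_isHomogeneous m f)
  rw [Finset.sum_congr rfl (fun m _ => hterm m)]
  by_cases hjn : j ≤ n
  · rw [if_pos hjn]
    rw [Finset.sum_eq_single (n - j)]
    · rw [if_pos (by omega)]
    · intro m _ hm
      rw [if_neg (by omega)]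
    · intro hmem
      rw [if_pos (by omega)]
      rw [homogeneousComponent_eq_zero _ f (by
        simp only [Finset.mem_range, not_lt] at hmem
        omega), mul_zero]
  · rw [if_neg hjn]
    refine Finset.sum_eq_zero fun m _ => ?_
    rw [if_neg (by omega)]

end TorusLatticeAux

namespace TorusLatticeAux

/-- The submonoid of representatives of points of `Y`. -/
def Msub (hs : 0 < s) (Y : Set (Projectivization K (Fin s → K)))
    (hT : Y ⊆ projTorus K s) (hm : IsProjSubmonoid Y) : Submonoid (Fin s → K) where
  carrier := {α | ∃ h : α ≠ 0, Projectivization.mk K α h ∈ Y}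
  one_mem' := by
    have hone : (1 : Fin s → K) ≠ 0 := fun h => one_ne_zero (congrFun h ⟨0, hs⟩)
    exact ⟨hone, hm.1 hone⟩
  mul_mem' := by
    rintro α β ⟨hα, hαY⟩ ⟨hβ, hβY⟩
    have hi : ∀ i, α i ≠ 0 := fun i => hT hαY α hα rfl i
    have hj : ∀ i, β i ≠ 0 := fun i => hT hβY β hβ rfl i
    have hab : α * β ≠ 0 := fun h =>
      mul_ne_zero (hi ⟨0, hs⟩) (hj ⟨0, hs⟩) (congrFun h ⟨0, hs⟩)
    exact ⟨hab, hm.2 α β hα hβ hαY hβY hab⟩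

end TorusLatticeAux

theorem torus_submonoid_lattice (hs : 0 < s)
    (Y : Set (Projectivization K (Fin s → K)))
    (hT : Y ⊆ projTorus K s) (hm : IsProjSubmonoid Y) :
    IsLatticeIdeal (projVanishingIdeal Y) := by
  classical
  set M := TorusLatticeAux.Msub hs Y hT hm with hM
  -- the generating set of the projective vanishing ideal
  have hGB : {f : MvPolynomial (Fin s) K | (∃ n, f.IsHomogeneous n) ∧
      ∀ (α : Fin s → K) (hα : α ≠ 0), Projectivization.mk K α hα ∈ Y → eval α f = 0}
      ⊆ Ideal.span (TorusLatticeAux.Bset M) := by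
    rintro f ⟨⟨n, hhom⟩, hvan⟩
    refine TorusLatticeAux.homog_vanish_mem_span M f.support.card f n le_rfl hhom ?_
    rintro ⟨α, hα0, hαY⟩
    exact hvan α hα0 hαY
  have hBG : TorusLatticeAux.Bset M ⊆ {f : MvPolynomial (Fin s) K | (∃ n, f.IsHomogeneous n) ∧
      ∀ (α : Fin s → K) (hα : α ≠ 0), Projectivization.mk K α hα ∈ Y → eval α f = 0} := by
    rintro f ⟨_, ⟨n, hhom⟩, hvan⟩
    exact ⟨⟨n, hhom⟩, fun α hα hY => hvan ⟨α, hα, hY⟩⟩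
  have hspan : projVanishingIdeal Y = Ideal.span (TorusLatticeAux.Bset M) := by
    apply le_antisymm
    · exact Ideal.span_le.2 hGB
    · exact Ideal.span_le.2 fun f hf => Ideal.subset_span (hBG hf)
  constructor
  · exact ⟨TorusLatticeAux.Bset M, fun f hf => hf.1, hspan⟩
  · intro i f hf
    -- all homogeneous components of an element of the ideal vanish on M
    have hcomp : ∀ g ∈ projVanishingIdeal Y, ∀ n, ∀ α : M,
        eval (α : Fin s → K) (homogeneousComponent n g) = 0 := by
      intro g hg
      refine Submodule.span_induction
        (p := fun x _ => ∀ n, ∀ α : M, eval (α : Fin s → K) (homogeneousComponent n x) = 0)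
        ?_ ?_ ?_ ?_ hg
      · rintro x ⟨⟨m, hxm⟩, hxv⟩ n α
        rw [homogeneousComponent_of_mem ((mem_homogeneousSubmodule _ _).2 hxm)]
        split
        · obtain ⟨hα0, hαY⟩ := α.2
          exact hxv _ hα0 hαY
        · simp
      · intro n α; simp
      · intro x y hx hy hx' hy' n α
        rw [map_add, map_add, hx' n α, hy' n α, add_zero]
      · intro a x hx hx' n α
        rw [smul_eq_mul]
        conv_lhs => rw [← sum_homogeneousComponent a]
        rw [Finset.sum_mul, map_sum, map_sum]
        refine Finset.sum_eq_zero fun j _ => ?_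
        rw [TorusLatticeAux.homogeneousComponent_mul_homog _ x j n
          (homogeneousComponent_isHomogeneous j a)]
        split
        · rw [map_mul, hx' _ α, mul_zero]
        · simp
    have hfcomp : ∀ n, ∀ α : M, eval (α : Fin s → K) (homogeneousComponent n f) = 0 := by
      intro n α
      have h1 := hcomp _ hf (n + 1) α
      rw [TorusLatticeAux.homogeneousComponent_mul_homog (X i) f 1 (n + 1)
        (isHomogeneous_X _ _), if_pos (by omega)] at h1
      simp only [Nat.add_sub_cancel] at h1
      rw [map_mul, eval_X] at h1
      have hαi : (α : Fin s → K) i ≠ 0 := by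
        obtain ⟨hα0, hαY⟩ := α.2
        exact hT hαY _ hα0 rfl i
      exact (mul_eq_zero.1 h1).resolve_left hαi
    have hrepr : f = ∑ n ∈ Finset.range (f.totalDegree + 1), homogeneousComponent n f :=
      (sum_homogeneousComponent f).symm
    rw [hrepr]
    refine Submodule.sum_mem _ fun n _ => ?_
    refine Ideal.subset_span ⟨⟨n, homogeneousComponent_isHomogeneous n f⟩, ?_⟩
    intro α hα0 hαY
    exact hfcomp n ⟨α, hα0, hαY⟩
end
end

section
/- Let K be an algebraically closed field and 𝕐 ⊆ ℙ^{s−1}. Then 𝕐 is a finite subgroup of the projective torus T if and only if there exist a finite subgroup H of K* and vectors v₁,...,vₛ ∈ ℤⁿ such that 𝕐 = {[(x^{v₁},...,x^{vₛ})] : x = (x₁,...,xₙ), xᵢ ∈ H for all i}. -/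
open MvPolynomial

noncomputable section

variable {K : Type} [Field K] {s : ℕ}

namespace SgpAux

def C (u : Fin s → Kˣ) : Fin s → K := fun i => (u i : K)

lemma C_ne (hs : 0 < s) (u : Fin s → Kˣ) : C u ≠ 0 := by
  intro h
  exact (u ⟨0, hs⟩).ne_zero (congrFun h ⟨0, hs⟩)


lemma C_mul (u w : Fin s → Kˣ) : C (u * w) = C u * C w := rfl

lemma C_one : C (1 : Fin s → Kˣ) = (1 : Fin s → K) := rfl

lemma C_inv (u : Fin s → Kˣ) : C u⁻¹ = (C u)⁻¹ := by
  funext i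
  simp [C]

lemma mk_congr {α β : Fin s → K} (h : α = β) (hα : α ≠ 0) (hβ : β ≠ 0) :
    Projectivization.mk K α hα = Projectivization.mk K β hβ := by subst h; rfl

open Classical in
noncomputable def w (hs : 0 < s) (p : Projectivization K (Fin s → K)) : Fin s → Kˣ :=
  fun i =>
    if h : p.rep i ≠ 0 ∧ p.rep ⟨0, hs⟩ ≠ 0 then Units.mk0 _ h.1 * (Units.mk0 _ h.2)⁻¹ else 1

lemma w_coe (hs : 0 < s) {p : Projectivization K (Fin s → K)} (hp : p ∈ projTorus K s) (i : Fin s) :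
    (w hs p i : K) = p.rep i * (p.rep ⟨0, hs⟩)⁻¹ := by
  have h1 : p.rep i ≠ 0 := hp p.rep p.rep_nonzero p.mk_rep i
  have h2 : p.rep ⟨0, hs⟩ ≠ 0 := hp p.rep p.rep_nonzero p.mk_rep _
  simp [w, h1, h2]

/-- normalization characterization -/
lemma w_eq (hs : 0 < s) {p : Projectivization K (Fin s → K)} (hp : p ∈ projTorus K s)
    {α : Fin s → K} (hα : α ≠ 0) (hmk : Projectivization.mk K α hα = p) (i : Fin s) :
    (w hs p i : K) = α i * (α ⟨0, hs⟩)⁻¹ := by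
  have h0 : α ⟨0, hs⟩ ≠ 0 := hp α hα hmk _
  have : Projectivization.mk K p.rep p.rep_nonzero = Projectivization.mk K α hα :=
    p.mk_rep.trans hmk.symm
  obtain ⟨c, hc⟩ := (Projectivization.mk_eq_mk_iff K _ _ _ _).1 this
  have hrep : ∀ j, p.rep j = (c : K) * α j := fun j => by
    rw [← hc]; rfl
  rw [w_coe hs hp, hrep, hrep]
  field_simp

lemma mk_C_w (hs : 0 < s) {p : Projectivization K (Fin s → K)} (hp : p ∈ projTorus K s) :
    Projectivization.mk K (C (w hs p)) (C_ne hs _) = p := by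
  have h2 : p.rep ⟨0, hs⟩ ≠ 0 := hp p.rep p.rep_nonzero p.mk_rep _
  conv_rhs => rw [← p.mk_rep]
  rw [Projectivization.mk_eq_mk_iff]
  refine ⟨(Units.mk0 _ h2)⁻¹, funext fun i => ?_⟩
  have := w_coe hs hp i
  simp only [Pi.smul_apply, Units.smul_def, smul_eq_mul, C, this]
  rw [mul_comm]
  congr 1

lemma w_zero (hs : 0 < s) {p : Projectivization K (Fin s → K)} (hp : p ∈ projTorus K s) :
    w hs p ⟨0, hs⟩ = 1 := by
  have h2 : p.rep ⟨0, hs⟩ ≠ 0 := hp p.rep p.rep_nonzero p.mk_rep _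
  ext
  rw [w_coe hs hp, mul_inv_cancel₀ h2, Units.val_one]

/-- idempotence -/
lemma w_of_normalized (hs : 0 < s) {u : Fin s → Kˣ} (hu : u ⟨0, hs⟩ = 1)
    {p : Projectivization K (Fin s → K)} (hp : p ∈ projTorus K s)
    (hmk : Projectivization.mk K (C u) (C_ne hs u) = p) :
    w hs p = u := by
  funext i
  ext
  rw [w_eq hs hp (C_ne hs u) hmk i]
  simp [C, hu]


section group

variable (hs : 0 < s) {Y : Set (Projectivization K (Fin s → K))}

lemma one_ne (hs : 0 < s) : (1 : Fin s → K) ≠ 0 :=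
  fun h => one_ne_zero (congrFun h ⟨0, hs⟩)

lemma mk_C_mem (htor : Y ⊆ projTorus K s) {a : Fin s → Kˣ} (ha : a ∈ w hs '' Y) :
    Projectivization.mk K (C a) (C_ne hs a) ∈ Y := by
  obtain ⟨p, hp, rfl⟩ := ha
  rw [mk_C_w hs (htor hp)]
  exact hp

lemma w_zero_of_mem (htor : Y ⊆ projTorus K s) {a : Fin s → Kˣ} (ha : a ∈ w hs '' Y) :
    a ⟨0, hs⟩ = 1 := by
  obtain ⟨p, hp, rfl⟩ := ha
  exact w_zero hs (htor hp)

lemma A_mem_of (htor : Y ⊆ projTorus K s) {u : Fin s → Kˣ} (hu0 : u ⟨0, hs⟩ = 1)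
    (hmem : Projectivization.mk K (C u) (C_ne hs u) ∈ Y) : u ∈ w hs '' Y :=
  ⟨_, hmem, w_of_normalized hs hu0 (htor hmem) rfl⟩

lemma A_one (htor : Y ⊆ projTorus K s) (hmono : IsProjSubmonoid Y) :
    (1 : Fin s → Kˣ) ∈ w hs '' Y := by
  refine A_mem_of hs htor rfl ?_
  rw [mk_congr (C_one (K := K) (s := s)) (C_ne hs 1) (one_ne hs)]
  exact hmono.1 (one_ne hs)

lemma A_mul (htor : Y ⊆ projTorus K s) (hmono : IsProjSubmonoid Y) {a b : Fin s → Kˣ}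
    (ha : a ∈ w hs '' Y) (hb : b ∈ w hs '' Y) : a * b ∈ w hs '' Y := by
  refine A_mem_of hs htor ?_ ?_
  · simp [w_zero_of_mem hs htor ha, w_zero_of_mem hs htor hb]
  · rw [mk_congr (C_mul a b) (C_ne hs _) (by rw [← C_mul]; exact C_ne hs _)]
    exact hmono.2 (C a) (C b) (C_ne hs a) (C_ne hs b) (mk_C_mem hs htor ha)
      (mk_C_mem hs htor hb) _

lemma A_inv (htor : Y ⊆ projTorus K s)
    (hinv : ∀ (α : Fin s → K) (hα : α ≠ 0), Projectivization.mk K α hα ∈ Y →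
      ∀ h : α⁻¹ ≠ 0, Projectivization.mk K α⁻¹ h ∈ Y)
    {a : Fin s → Kˣ} (ha : a ∈ w hs '' Y) : a⁻¹ ∈ w hs '' Y := by
  refine A_mem_of hs htor ?_ ?_
  · simp [w_zero_of_mem hs htor ha]
  · rw [mk_congr (C_inv a) (C_ne hs _) (by rw [← C_inv]; exact C_ne hs _)]
    exact hinv (C a) (C_ne hs a) (mk_C_mem hs htor ha) _

end group

end SgpAux

theorem subgroup_iff_monomial_param {K : Type} [Field K] [IsAlgClosed K] {s : ℕ}
    (hs : 0 < s) (Y : Set (Projectivization K (Fin s → K))) :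
    (Y.Finite ∧ IsTorusSubgroup Y) ↔
      ∃ (n : ℕ) (H : Subgroup Kˣ) (v : Fin s → Fin n → ℤ),
        (H : Set Kˣ).Finite ∧
        Y = {p | ∃ x : Fin n → Kˣ, (∀ j, x j ∈ H) ∧
          ∃ h : (fun i => ∏ j, ((x j : K) ^ (v i j))) ≠ 0,
            p = Projectivization.mk K (fun i => ∏ j, ((x j : K) ^ (v i j))) h} := by
  constructor
  · rintro ⟨hfin, htor, hmono, hinv⟩
    classical
    set A : Set (Fin s → Kˣ) := SgpAux.w hs '' Y with hA
    have hAfin : A.Finite := hfin.image _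
    let G : Subgroup (Fin s → Kˣ) :=
      { carrier := A
        one_mem' := SgpAux.A_one hs htor hmono
        mul_mem' := fun ha hb => SgpAux.A_mul hs htor hmono ha hb
        inv_mem' := fun ha => SgpAux.A_inv hs htor hinv ha }
    haveI hGfin : Finite G := by
      haveI := hAfin.to_subtype
      exact Finite.of_injective (fun x : G => (⟨x.1, x.2⟩ : ↥A))
        (fun a b h => Subtype.ext (congrArg Subtype.val h))
    haveI : Nonempty G := ⟨1⟩
    set N : ℕ := Nat.card G with hNdef
    have hN : 0 < N := Nat.card_pos
    haveI : NeZero N := ⟨hN.ne'⟩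
    have hpowA : ∀ a ∈ A, ∀ i : Fin s, (a i) ^ N = 1 := by
      intro a ha i
      have h1 : (⟨a, ha⟩ : G) ^ N = 1 := pow_card_eq_one'
      have h2 : a ^ N = 1 := by
        have := congrArg (Subtype.val) h1
        simpa using this
      calc (a i) ^ N = (a ^ N) i := rfl
        _ = 1 := by rw [h2]; rfl
    obtain ⟨g0, hg0⟩ := IsCyclic.exists_generator (α := rootsOfUnity N K)
    set g : Kˣ := (g0 : Kˣ) with hgdef
    have hgN : g ^ N = 1 := g0.2
    have hg : ∀ a ∈ A, ∀ i : Fin s, ∃ d : ℤ, a i = g ^ d := by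
      intro a ha i
      obtain ⟨d, hd⟩ := Subgroup.mem_zpowers_iff.1
        (hg0 ⟨a i, (mem_rootsOfUnity N (a i)).2 (hpowA a ha i)⟩)
      refine ⟨d, ?_⟩
      have := congrArg (fun z : rootsOfUnity N K => (z : Kˣ)) hd
      simpa using this.symm
    have hHfin : ((Subgroup.zpowers g : Subgroup Kˣ) : Set Kˣ).Finite :=
      IsOfFinOrder.finite_zpowers (isOfFinOrder_iff_pow_eq_one.2 ⟨N, hN, hgN⟩)
    haveI := hAfin.fintype
    set n : ℕ := Fintype.card ↥A with hndef
    set e : Fin n ≃ ↥A := (Fintype.equivFin ↥A).symm with hedef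
    choose d hd using fun (k : Fin n) (i : Fin s) => hg ((e k : Fin s → Kˣ)) (e k).2 i
    refine ⟨n, Subgroup.zpowers g, fun i k => d k i, hHfin, ?_⟩
    ext p
    constructor
    · intro hp
      have hwp : SgpAux.w hs p ∈ A := ⟨p, hp, rfl⟩
      set k0 : Fin n := e.symm ⟨SgpAux.w hs p, hwp⟩ with hk0
      refine ⟨fun j => if j = k0 then g else 1, fun j => ?_, ?_⟩
      · by_cases h : j = k0 <;> simp [h, Subgroup.mem_zpowers, Subgroup.one_mem]
      · have hΦ : (fun i => ∏ j, (((if j = k0 then g else 1 : Kˣ) : K) ^ (d j i)))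
            = SgpAux.C (SgpAux.w hs p) := by
          funext i
          have : ∀ j : Fin n, (((if j = k0 then g else 1 : Kˣ) : K) ^ (d j i))
              = if j = k0 then ((g : K) ^ (d j i)) else 1 := by
            intro j; by_cases h : j = k0 <;> simp [h]
          rw [Finset.prod_congr rfl (fun j _ => this j), Finset.prod_ite_eq' Finset.univ k0
            (fun j => (g : K) ^ (d j i))]
          simp only [Finset.mem_univ, if_true]
          rw [← Units.val_zpow_eq_zpow_val, ← hd k0 i]
          have : (e k0 : Fin s → Kˣ) = SgpAux.w hs p := by
            rw [hk0, Equiv.apply_symm_apply]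
          rw [this]; rfl
        refine ⟨by rw [hΦ]; exact SgpAux.C_ne hs _, ?_⟩
        rw [SgpAux.mk_congr hΦ _ (SgpAux.C_ne hs _)]
        exact (SgpAux.mk_C_w hs (htor hp)).symm
    · rintro ⟨x, hxH, h, rfl⟩
      choose c hc using fun j => Subgroup.mem_zpowers_iff.1 (hxH j)
      set b : Fin s → Kˣ := ∏ j, ((e j : Fin s → Kˣ)) ^ (c j) with hb
      have hbA : b ∈ A := by
        refine Subgroup.prod_mem G (fun j _ => ?_)
        exact Subgroup.zpow_mem G ((e j).2 : ((e j : Fin s → Kˣ)) ∈ G) (c j)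
      have hΦ : (fun i => ∏ j, ((x j : K) ^ (d j i))) = SgpAux.C b := by
        funext i
        have hbi : b i = ∏ j, ((e j : Fin s → Kˣ) i) ^ (c j) := by
          rw [hb]
          simp [Finset.prod_apply]
        have : SgpAux.C b i = ∏ j, (((e j : Fin s → Kˣ) i : K)) ^ (c j) := by
          show ((b i : Kˣ) : K) = _
          rw [hbi]
          rw [show ((∏ j, ((e j : Fin s → Kˣ) i) ^ (c j) : Kˣ) : K)
            = Units.coeHom K (∏ j, ((e j : Fin s → Kˣ) i) ^ (c j)) from rfl, map_prod]
          simp [Units.val_zpow_eq_zpow_val]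
        rw [this]
        refine Finset.prod_congr rfl (fun j _ => ?_)
        rw [← hc j, hd j i, Units.val_zpow_eq_zpow_val, Units.val_zpow_eq_zpow_val,
          ← zpow_mul, ← zpow_mul, mul_comm]
      rw [SgpAux.mk_congr hΦ _ (SgpAux.C_ne hs _)]
      exact SgpAux.mk_C_mem hs htor hbA
  · rintro ⟨n, H, v, hHfin, rfl⟩
    classical
    have hΦC : ∀ x : Fin n → Kˣ, (fun i => ∏ j, ((x j : K) ^ (v i j)))
        = SgpAux.C (fun i => ∏ j, (x j) ^ (v i j)) := by
      intro x; funext i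
      show _ = ((∏ j, (x j) ^ (v i j) : Kˣ) : K)
      rw [show ((∏ j, (x j) ^ (v i j) : Kˣ) : K)
        = Units.coeHom K (∏ j, (x j) ^ (v i j)) from rfl, map_prod]
      simp [Units.val_zpow_eq_zpow_val]
    have hΦne : ∀ x : Fin n → Kˣ, (fun i => ∏ j, ((x j : K) ^ (v i j))) ≠ 0 := fun x => by
      rw [hΦC]; exact SgpAux.C_ne hs _
    have hΦi : ∀ (x : Fin n → Kˣ) (i : Fin s), (∏ j, ((x j : K) ^ (v i j))) ≠ 0 := by
      intro x i
      have := congrFun (hΦC x) i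
      rw [this]
      exact Units.ne_zero _
    refine ⟨?_, ?_, ⟨?_, ?_⟩, ?_⟩
    · -- finiteness
      have : {p | ∃ x : Fin n → Kˣ, (∀ j, x j ∈ H) ∧
            ∃ h : (fun i => ∏ j, ((x j : K) ^ (v i j))) ≠ 0,
              p = Projectivization.mk K (fun i => ∏ j, ((x j : K) ^ (v i j))) h}
          = (fun x : Fin n → Kˣ =>
              Projectivization.mk K (fun i => ∏ j, ((x j : K) ^ (v i j))) (hΦne x)) ''
            {x | ∀ j, x j ∈ (H : Set Kˣ)} := by
        ext q
        constructor
        · rintro ⟨x, hx, h, rfl⟩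
          exact ⟨x, hx, rfl⟩
        · rintro ⟨x, hx, rfl⟩
          exact ⟨x, hx, hΦne x, rfl⟩
      rw [this]
      exact (Set.Finite.pi' fun _ => hHfin).image _
    · -- torus
      rintro p ⟨x, hx, h, rfl⟩
      intro α hα hmk i
      obtain ⟨u, hu⟩ := (Projectivization.mk_eq_mk_iff K _ _ _ _).1 hmk
      have : α i = (u : K) * ∏ j, ((x j : K) ^ (v i j)) := by rw [← hu]; rfl
      rw [this]
      exact mul_ne_zero (Units.ne_zero u) (hΦi x i)
    · -- one
      intro h1
      refine ⟨1, fun j => H.one_mem, ?_⟩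
      have h1' : ((fun i => ∏ j, (((1 : Fin n → Kˣ) j : K) ^ (v i j))) : Fin s → K)
          = (1 : Fin s → K) := by
        funext i; simp
      exact ⟨h1'.symm ▸ h1, SgpAux.mk_congr h1'.symm h1 _⟩
    · -- mul
      rintro α β hα hβ hαY hβY hab
      obtain ⟨x, hx, h1, e1⟩ := hαY
      obtain ⟨y, hy, h2, e2⟩ := hβY
      obtain ⟨u, hu⟩ := (Projectivization.mk_eq_mk_iff K _ _ _ _).1 e1
      obtain ⟨u', hu'⟩ := (Projectivization.mk_eq_mk_iff K _ _ _ _).1 e2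
      refine ⟨x * y, fun j => H.mul_mem (hx j) (hy j), hΦne (x * y), ?_⟩
      rw [Projectivization.mk_eq_mk_iff]
      refine ⟨u * u', funext fun i => ?_⟩
      have hαi : α i = (u : K) * ∏ j, ((x j : K) ^ (v i j)) := by rw [← hu]; rfl
      have hβi : β i = (u' : K) * ∏ j, ((y j : K) ^ (v i j)) := by rw [← hu']; rfl
      have hxy : (∏ j, (((x * y) j : K) ^ (v i j)))
          = (∏ j, ((x j : K) ^ (v i j))) * (∏ j, ((y j : K) ^ (v i j))) := by
        rw [← Finset.prod_mul_distrib]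
        refine Finset.prod_congr rfl fun j _ => ?_
        rw [Pi.mul_apply, Units.val_mul, mul_zpow]
      show (u * u' : Kˣ) • (∏ j, (((x * y) j : K) ^ (v i j))) = α i * β i
      rw [hαi, hβi, hxy, Units.smul_def, Units.val_mul, smul_eq_mul]
      ring
    · -- inv
      rintro α hα ⟨x, hx, h1, e1⟩ hinv
      obtain ⟨u, hu⟩ := (Projectivization.mk_eq_mk_iff K _ _ _ _).1 e1
      refine ⟨x⁻¹, fun j => H.inv_mem (hx j), hΦne x⁻¹, ?_⟩
      rw [Projectivization.mk_eq_mk_iff]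
      refine ⟨u⁻¹, funext fun i => ?_⟩
      have hαi : α i = (u : K) * ∏ j, ((x j : K) ^ (v i j)) := by rw [← hu]; rfl
      have hxinv : (∏ j, ((x⁻¹ j : K) ^ (v i j)))
          = (∏ j, ((x j : K) ^ (v i j)))⁻¹ := by
        rw [← Finset.prod_inv_distrib]
        refine Finset.prod_congr rfl fun j _ => ?_
        rw [Pi.inv_apply, Units.val_inv_eq_inv_val, inv_zpow]
      show (u⁻¹ : Kˣ) • (∏ j, ((x⁻¹ j : K) ^ (v i j))) = α⁻¹ i
      rw [Pi.inv_apply, hαi, hxinv, Units.smul_def, smul_eq_mul, mul_inv, Units.val_inv_eq_inv_val]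
end
end
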